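/- Let R be a commutative Artinian local ring that is injective as a module over itself (i.e., a zero-dimensional Gorenstein local ring) and let M be a finitely generated R-module. Then the length of M as an R-module equals the length of Hom_R(M, R) as an R-module. -/

import Mathlib

namespace StarkAux

open IsLocalRing

variable {R : Type*} [CommRing R]

/-- In an Artinian local ring there is a nonzero annihilator of the maximal ideal. -/
lemma exists_ann [IsArtinianRing R] [IsLocalRing R] :
    ∃ a : R, a ≠ 0 ∧ ∀ r ∈ maximalIdeal R, r * a = 0 := by
  obtain ⟨n, hn⟩ : IsNilpotent (maximalIdeal R) := by
    have := IsArtinianRing.isNilpotent_jacobson_bot (R := R)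
    rwa [jacobson_eq_maximalIdeal (⊥ : Ideal R) bot_ne_top] at this
  have hex : ∃ k, (maximalIdeal R) ^ k = 0 := ⟨n, hn⟩
  classical
  have hk0 : (maximalIdeal R) ^ (Nat.find hex) = 0 := Nat.find_spec hex
  have hkne : Nat.find hex ≠ 0 := by
    intro h
    rw [h, pow_zero, Ideal.one_eq_top] at hk0
    have hb : (⊤ : Ideal R) = ⊥ := by simpa using hk0
    exact top_ne_bot hb
  obtain ⟨j, hjk⟩ : ∃ j, Nat.find hex = j + 1 :=
    ⟨Nat.find hex - 1, (Nat.succ_pred_eq_of_pos (Nat.pos_of_ne_zero hkne)).symm⟩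
  have hj : (maximalIdeal R) ^ j ≠ 0 := Nat.find_min hex (by omega)
  obtain ⟨a, ha, ha0⟩ : ∃ a ∈ (maximalIdeal R) ^ j, a ≠ 0 := by
    by_contra h
    push_neg at h
    refine hj ?_
    rw [Ideal.zero_eq_bot, eq_bot_iff]
    intro x hx
    exact (Submodule.mem_bot R).2 (h x hx)
  refine ⟨a, ha0, fun r hr => ?_⟩
  have hmem : r * a ∈ (maximalIdeal R) ^ (j + 1) := by
    rw [pow_succ']
    exact Ideal.mul_mem_mul hr ha
  rw [← hjk, hk0] at hmem
  simpa using hmem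

variable [Module.Injective R R]
variable {M : Type*} [AddCommGroup M] [Module R M]

/-- Extension property of the self-injective ring `R`, in arbitrary universes. -/
lemma extend {P P' : Type*} [AddCommGroup P] [AddCommGroup P'] [Module R P] [Module R P']
    (i : P →ₗ[R] P') (hi : Function.Injective i) (g : P →ₗ[R] R) :
    ∃ h : P' →ₗ[R] R, ∀ x, h (i x) = g x := by
  obtain ⟨h, hh⟩ := (Module.Baer.of_injective ‹Module.Injective R R›).extension_property i hi g
  exact ⟨h, fun x => LinearMap.congr_fun hh x⟩

/-- Separating functionals exist: for nonzero `x` there is `f : M →ₗ[R] R` with `f x ≠ 0`. -/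
lemma exists_dual_ne_zero [IsArtinianRing R] [IsLocalRing R] {x : M} (hx : x ≠ 0) :
    ∃ f : M →ₗ[R] R, f x ≠ 0 := by
  obtain ⟨a, ha0, ha⟩ := exists_ann (R := R)
  set φ : R →ₗ[R] M := LinearMap.toSpanSingleton R M x with hφ
  have hker : ∀ r ∈ LinearMap.ker φ, r * a = 0 := by
    intro r hr
    refine ha r (le_maximalIdeal (fun htop => ?_) hr)
    have h1 : (1 : R) ∈ LinearMap.ker φ := htop ▸ Submodule.mem_top
    rw [LinearMap.mem_ker, hφ, LinearMap.toSpanSingleton_apply, one_smul] at h1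
    exact hx h1
  set g1 : (R ⧸ LinearMap.ker φ) →ₗ[R] R :=
    Submodule.liftQ (LinearMap.ker φ) (LinearMap.toSpanSingleton R R a)
      (fun r hr => by
        rw [LinearMap.mem_ker, LinearMap.toSpanSingleton_apply, smul_eq_mul]
        exact hker r hr) with hg1
  set e := φ.quotKerEquivRange with he
  set χ : (LinearMap.range φ) →ₗ[R] R := g1 ∘ₗ (e.symm : _ →ₗ[R] _) with hχ
  obtain ⟨f, hf⟩ := extend (LinearMap.range φ).subtype (Submodule.injective_subtype _) χ
  have hxm : x ∈ LinearMap.range φ := ⟨1, by simp [hφ]⟩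
  refine ⟨f, ?_⟩
  have h1 : f x = χ ⟨x, hxm⟩ := hf ⟨x, hxm⟩
  have h2 : e.symm ⟨x, hxm⟩ = Submodule.Quotient.mk 1 := by
    apply e.injective
    rw [LinearEquiv.apply_symm_apply]
    refine Subtype.ext ?_
    rw [he, LinearMap.quotKerEquivRange_apply_mk]
    show x = φ 1
    simp [hφ, LinearMap.toSpanSingleton_apply]
  rw [h1, hχ]
  simp only [LinearMap.coe_comp, Function.comp_apply, LinearEquiv.coe_coe, h2, hg1]
  rw [Submodule.liftQ_apply, LinearMap.toSpanSingleton_apply, one_smul]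
  exact ha0

/-- If `g` vanishes wherever all elements of a finitely generated `F` vanish, then `g ∈ F`. -/
lemma mem_of_forall_vanish (F : Submodule R (M →ₗ[R] R)) (hFG : F.FG) (g : M →ₗ[R] R)
    (hg : ∀ x : M, (∀ f ∈ F, f x = 0) → g x = 0) : g ∈ F := by
  classical
  obtain ⟨s, hs⟩ := hFG
  set p : M →ₗ[R] (↥s → R) := LinearMap.pi (fun i => (i : M →ₗ[R] R)) with hp
  have hker : LinearMap.ker p ≤ LinearMap.ker g := by
    intro x hxk
    rw [LinearMap.mem_ker] at hxk ⊢
    refine hg x fun f hf => ?_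
    rw [← hs] at hf
    refine Submodule.span_induction (p := fun f _ => f x = 0) (fun f hf => ?_) (by simp)
      (fun f f' _ _ hfx hfx' => by simp [LinearMap.add_apply, hfx, hfx'])
      (fun c f _ hfx => by simp [LinearMap.smul_apply, hfx]) hf
    exact congrFun hxk ⟨f, hf⟩
  set q0 : (M ⧸ LinearMap.ker p) →ₗ[R] R := Submodule.liftQ (LinearMap.ker p) g hker with hq0
  set e := p.quotKerEquivRange with he
  set χ : (LinearMap.range p) →ₗ[R] R := q0 ∘ₗ (e.symm : _ →ₗ[R] _) with hχ
  obtain ⟨h, hh⟩ := extend (LinearMap.range p).subtype (Submodule.injective_subtype _) χ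
  have key : ∀ x : M, g x = h (p x) := by
    intro x
    have hxm : p x ∈ LinearMap.range p := LinearMap.mem_range_self p x
    have h1 : h (p x) = χ ⟨p x, hxm⟩ := hh ⟨p x, hxm⟩
    have h2 : e.symm ⟨p x, hxm⟩ = Submodule.Quotient.mk x := by
      apply e.injective
      rw [LinearEquiv.apply_symm_apply]
      refine Subtype.ext ?_
      simp [he, LinearMap.quotKerEquivRange_apply_mk]
    rw [h1, hχ]
    simp only [LinearMap.coe_comp, Function.comp_apply, LinearEquiv.coe_coe, h2, hq0]
    rw [Submodule.liftQ_apply]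
  have hgsum : g = ∑ i : ↥s, (h fun j => if i = j then (1 : R) else 0) • (i : M →ₗ[R] R) := by
    ext x
    rw [key x]
    have hpx : p x = ∑ i : ↥s, (p x i) • fun j => if i = j then (1 : R) else 0 :=
      pi_eq_sum_univ (p x)
    rw [hpx, map_sum]
    simp only [map_smul, LinearMap.sum_apply, LinearMap.smul_apply]
    refine Finset.sum_congr rfl fun i _ => ?_
    simp only [hp, LinearMap.pi_apply, smul_eq_mul]
    ring
  rw [hgsum]
  refine Submodule.sum_mem _ fun i _ => Submodule.smul_mem _ _ ?_
  exact hs ▸ Submodule.subset_span i.2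

variable [IsArtinianRing R] [IsLocalRing R]

lemma dualAnnihilator_strictAnti {N1 N2 : Submodule R M} (h : N1 < N2) :
    N2.dualAnnihilator < N1.dualAnnihilator := by
  obtain ⟨x, hx2, hx1⟩ := SetLike.exists_of_lt h
  have hxq : (Submodule.Quotient.mk x : M ⧸ N1) ≠ 0 := by
    simpa [Submodule.Quotient.mk_eq_zero] using hx1
  obtain ⟨f', hf'⟩ := exists_dual_ne_zero (R := R) hxq
  rw [SetLike.lt_iff_le_and_exists]
  refine ⟨fun φ hφ => ?_, f' ∘ₗ N1.mkQ, ?_, ?_⟩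
  · rw [Submodule.mem_dualAnnihilator] at hφ ⊢
    exact fun y hy => hφ y (h.le hy)
  · rw [Submodule.mem_dualAnnihilator]
    intro w hw
    simp [Submodule.Quotient.mk_eq_zero, (Submodule.Quotient.mk_eq_zero N1).2 hw]
  · rw [Submodule.mem_dualAnnihilator]
    push_neg
    exact ⟨x, hx2, by simpa using hf'⟩

lemma dualCoannihilator_strictAnti {F1 F2 : Submodule R (M →ₗ[R] R)} (hFG : F1.FG)
    (h : F1 < F2) : F2.dualCoannihilator < F1.dualCoannihilator := by
  obtain ⟨g, hg2, hg1⟩ := SetLike.exists_of_lt h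
  have hx : ∃ x : M, (∀ f ∈ F1, f x = 0) ∧ g x ≠ 0 := by
    by_contra hc
    push_neg at hc
    exact hg1 (mem_of_forall_vanish F1 hFG g fun x hxf => by
      by_contra hgx
      exact hgx (hc x hxf))
  obtain ⟨x, hx1, hgx⟩ := hx
  rw [SetLike.lt_iff_le_and_exists]
  refine ⟨fun y hy => ?_, x, ?_, ?_⟩
  · rw [Submodule.mem_dualCoannihilator] at hy ⊢
    exact fun f hf => hy f (h.le hf)
  · rw [Submodule.mem_dualCoannihilator]
    exact hx1
  · rw [Submodule.mem_dualCoannihilator]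
    push_neg
    exact ⟨g, hg2, hgx⟩

end StarkAux

open Order in
/-- Let `R` be a commutative Artinian local ring that is injective as a module
over itself (a zero-dimensional Gorenstein local ring) and let `M` be a finitely generated
`R`-module.  Then the length of `M` as an `R`-module equals the length of `Hom_R(M, R)` as an
`R`-module.  (The length of a module is formalized as the Krull dimension of its lattice of
submodules, i.e. the supremum of the lengths of chains of submodules.) -/
theorem stark_systems_stmt12 (R : Type*) [CommRing R] [IsArtinianRing R] [IsLocalRing R]
    [Module.Injective R R] (M : Type*) [AddCommGroup M] [Module R M] [Module.Finite R M] :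
    krullDim (Submodule R M) = krullDim (Submodule R (M →ₗ[R] R)) := by
  apply le_antisymm
  · have h1 : krullDim (Submodule R M) ≤ krullDim (Submodule R (M →ₗ[R] R))ᵒᵈ :=
      krullDim_le_of_strictMono (fun N => OrderDual.toDual N.dualAnnihilator)
        (fun {N1 N2} h => OrderDual.toDual_lt_toDual.2 (StarkAux.dualAnnihilator_strictAnti h))
    rwa [krullDim_orderDual] at h1
  · refine iSup_le fun p => ?_
    classical
    choose gs h1 h2 using fun i : Fin p.length => SetLike.exists_of_lt (show p.toFun i.castSucc < p.toFun i.succ by exact p.step i)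
    set G : Fin (p.length + 1) → Submodule R (M →ₗ[R] R) :=
      fun i => Submodule.span R (gs '' {j | (j : ℕ) < (i : ℕ)}) with hG
    have hGfg : ∀ i, (G i).FG := fun i => Submodule.fg_span (Set.toFinite _)
    have hGle : ∀ i, G i ≤ p i := by
      intro i
      refine Submodule.span_le.2 ?_
      rintro _ ⟨j, hj, rfl⟩
      simp only [Set.mem_setOf_eq] at hj
      exact p.monotone (by rw [Fin.le_def, Fin.val_succ]; omega) (h1 j)
    have hGstep : ∀ i : Fin p.length, G i.castSucc < G i.succ := by
      intro i
      rw [SetLike.lt_iff_le_and_exists]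
      refine ⟨Submodule.span_mono (Set.image_mono fun j hj => ?_), gs i, ?_, ?_⟩
      · simp only [Set.mem_setOf_eq, Fin.coe_castSucc, Fin.val_succ] at hj ⊢
        omega
      · exact Submodule.subset_span ⟨i, by simp, rfl⟩
      · exact fun hmem => h2 i (hGle i.castSucc hmem)
    let q : LTSeries (Submodule R M)ᵒᵈ :=
      ⟨p.length, fun i => OrderDual.toDual (G i).dualCoannihilator,
        fun i => OrderDual.toDual_lt_toDual.2
          (StarkAux.dualCoannihilator_strictAnti (hGfg _) (hGstep i))⟩
    have hq := Order.LTSeries.length_le_krullDim q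
    rw [krullDim_orderDual] at hq
    exact hq
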